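/- Fix integers m ≥ 2 and d ≥ 3, and let P_{m,d} ⊆ ℝ^{d−1} be the (d−1)-dimensional simplex with vertices u_0 = 0, u_1 = e_1, and u_j = e_{j−1} + m·e_j for 2 ≤ j ≤ d−1. Then the map sending a fundamental parallelepiped point λ = (λ_0, …, λ_{d−1}) of P_{m,d} with λ ≠ 0 to its coordinate λ_2 is injective, and its image is exactly the set of rational numbers of the form b/m^k with 1 ≤ k ≤ d−2, 0 < b < m^k, and m ∤ b. Consequently, the total number of fundamental parallelepiped points of P_{m,d} (including λ = 0) is m^{d−2}. -/

import Mathlib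

open scoped BigOperators Pointwise

/-- `lam` is a fundamental parallelepiped point for the simplex with vertices `v`:
`0 ≤ lam i < 1` for all `i` and `∑ i, lam i • (1, v i) ∈ ℤ^{n+1}`. -/
def IsFPP {N n : ℕ} (v : Fin N → Fin n → ℝ) (lam : Fin N → ℝ) : Prop :=
  (∀ i, 0 ≤ lam i ∧ lam i < 1) ∧
  (∃ z : ℤ, ∑ i, lam i = (z : ℝ)) ∧
  (∀ j, ∃ z : ℤ, ∑ i, lam i * v i j = (z : ℝ))

/-- Vertices of the simplex `P_{m,d} ⊆ ℝ^{d-1}`: `u_0 = 0`, `u_1 = e_1`,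
`u_j = e_{j-1} + m e_j` for `2 ≤ j ≤ d-1` (coordinates are 0-indexed). -/
def Pvert (m d : ℕ) : Fin d → Fin (d - 1) → ℝ := fun j i =>
  if (j : ℕ) = 0 then 0
  else if (j : ℕ) = 1 then (if (i : ℕ) = 0 then 1 else 0)
  else if (i : ℕ) = (j : ℕ) - 2 then 1
  else if (i : ℕ) = (j : ℕ) - 1 then (m : ℝ)
  else 0

noncomputable def psi (m d a : ℕ) (j : ℕ) : ℝ :=
  if j = 0 then 0
  else if j = 1 then Int.fract (-(a:ℝ) / (m:ℝ)^(d-2))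
  else Int.fract ((-1:ℝ)^j * (a:ℝ) / (m:ℝ)^(d-j))

noncomputable def Phi (m d a : ℕ) : Fin d → ℝ := fun j =>
  if (j:ℕ) = 0 then Int.fract (-(∑ i : Fin d, psi m d a (i:ℕ))) else psi m d a (j:ℕ)

lemma frA (x : ℝ) : ∃ z : ℤ, Int.fract (-x) + x = (z:ℝ) :=
  ⟨-⌊-x⌋, by rw [Int.fract]; push_cast; ring⟩

lemma frB (m : ℕ) (y : ℝ) : ∃ z : ℤ, (m:ℝ) * y + Int.fract (-((m:ℝ)*y)) = (z:ℝ) :=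
  ⟨-⌊-((m:ℝ)*y)⌋, by rw [Int.fract]; push_cast; ring⟩

lemma psi_two {m d : ℕ} (a : ℕ) (hd : 3 ≤ d) :
    psi m d a 2 = Int.fract ((a:ℝ) / (m:ℝ)^(d-2)) := by
  simp [psi]

lemma psi_zero (m d a : ℕ) : psi m d a 0 = 0 := by simp [psi]

lemma psi_mem {m d a : ℕ} (j : ℕ) : 0 ≤ psi m d a j ∧ psi m d a j < 1 := by
  unfold psi
  split_ifs <;>
    first
      | exact ⟨le_refl 0, one_pos⟩
      | exact ⟨Int.fract_nonneg _, Int.fract_lt_one _⟩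

lemma psi_rec {m d : ℕ} (a : ℕ) (hm : 1 ≤ m) (j : ℕ) (h2 : 2 ≤ j) (hj : j + 1 ≤ d - 1) :
    psi m d a (j+1) = Int.fract (-((m:ℝ) * psi m d a j)) := by
  have hm0 : (m:ℝ) ≠ 0 := by positivity
  have hd : 3 ≤ d := by omega
  have hdj : d - j = (d - (j+1)) + 1 := by omega
  have hpj : psi m d a j = Int.fract ((-1:ℝ)^j * (a:ℝ) / (m:ℝ)^(d-j)) := by
    unfold psi; rw [if_neg (by omega), if_neg (by omega)]
  have hpj1 : psi m d a (j+1) = Int.fract ((-1:ℝ)^(j+1) * (a:ℝ) / (m:ℝ)^(d-(j+1))) := by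
    unfold psi; rw [if_neg (by omega), if_neg (by omega)]
  rw [hpj, hpj1]
  set x : ℝ := (-1:ℝ)^j * (a:ℝ) / (m:ℝ)^(d-j) with hx
  have key : -((m:ℝ) * Int.fract x) = (-1:ℝ)^(j+1) * (a:ℝ) / (m:ℝ)^(d-(j+1)) + ((m:ℤ)*⌊x⌋ : ℤ) := by
    rw [Int.fract]
    push_cast
    rw [hx, hdj, pow_succ]
    field_simp
    ring
  rw [key, Int.fract_add_intCast]

lemma psi_last {m d : ℕ} (a : ℕ) (hm : 1 ≤ m) (hd : 3 ≤ d) :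
    ∃ z : ℤ, (m:ℝ) * psi m d a (d-1) = (z:ℝ) := by
  have hm0 : (m:ℝ) ≠ 0 := by positivity
  have hp : psi m d a (d-1) = Int.fract ((-1:ℝ)^(d-1) * (a:ℝ) / (m:ℝ)) := by
    unfold psi
    rw [if_neg (by omega), if_neg (by omega)]
    have : d - (d-1) = 1 := by omega
    rw [this, pow_one]
  refine ⟨(-1:ℤ)^(d-1) * a - m * ⌊(-1:ℝ)^(d-1) * (a:ℝ) / (m:ℝ)⌋, ?_⟩
  rw [hp, Int.fract]
  push_cast
  field_simp


lemma finIndSum {d : ℕ} (c : ℕ) (f : Fin d → ℝ) :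
    (∑ i : Fin d, if (i:ℕ) = c then f i else 0) = if h : c < d then f ⟨c,h⟩ else 0 := by
  split_ifs with h
  · rw [Finset.sum_eq_single (⟨c, h⟩ : Fin d)]
    · simp
    · intro i _ hi
      rw [if_neg]
      exact fun hc => hi (Fin.ext hc)
    · simp
  · apply Finset.sum_eq_zero
    intro i _
    rw [if_neg]
    exact fun hc => h (hc ▸ i.isLt)

lemma keySum {m d : ℕ} (hd : 3 ≤ d) (lam : Fin d → ℝ) (j : Fin (d-1)) :
    ∑ i, lam i * Pvert m d i j =
      lam ⟨(j:ℕ)+1, by omega⟩ * (if (j:ℕ) = 0 then 1 else (m:ℝ)) +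
      (if h : (j:ℕ)+2 < d then lam ⟨(j:ℕ)+2, h⟩ else 0) := by
  have hsplit : ∀ i : Fin d, lam i * Pvert m d i j =
      (if (i:ℕ) = (j:ℕ)+1 then lam i * (if (j:ℕ) = 0 then 1 else (m:ℝ)) else 0) +
      (if (i:ℕ) = (j:ℕ)+2 then lam i else 0) := by
    intro i
    have hj : (j:ℕ) < d - 1 := j.isLt
    unfold Pvert
    split_ifs <;> first | ring1 | (exfalso; omega)
  rw [Finset.sum_congr rfl (fun i _ => hsplit i), Finset.sum_add_distrib,
    finIndSum ((j:ℕ)+1) (fun i => lam i * (if (j:ℕ) = 0 then 1 else (m:ℝ))),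
    finIndSum ((j:ℕ)+2) lam, dif_pos (by omega : (j:ℕ)+1 < d)]

lemma psi_one {m d : ℕ} (a : ℕ) (hd : 3 ≤ d) :
    psi m d a 1 = Int.fract (-(psi m d a 2)) := by
  rw [psi_two a hd]
  set y : ℝ := (a:ℝ) / (m:ℝ)^(d-2) with hy
  have h1 : -(Int.fract y) = -y + ((⌊y⌋ : ℤ) : ℝ) := by rw [Int.fract]; push_cast; ring
  rw [h1, Int.fract_add_intCast]
  unfold psi
  rw [if_neg one_ne_zero, if_pos rfl, hy, neg_div]

lemma Phi_pos {m d : ℕ} (a c : ℕ) (h : c < d) (hc : c ≠ 0) :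
    Phi m d a ⟨c, h⟩ = psi m d a c := by
  simp [Phi, hc]

lemma Phi_isFPP {m d : ℕ} (a : ℕ) (hm : 1 ≤ m) (hd : 3 ≤ d) :
    IsFPP (Pvert m d) (Phi m d a) := by
  set T : ℝ := ∑ i : Fin d, psi m d a (i:ℕ) with hT
  refine ⟨?_, ?_, ?_⟩
  · intro i
    by_cases h : (i:ℕ) = 0
    · rw [show Phi m d a i = Int.fract (-T) by simp [Phi, h, hT]]
      exact ⟨Int.fract_nonneg _, Int.fract_lt_one _⟩
    · rw [show Phi m d a i = psi m d a (i:ℕ) by simp [Phi, h]]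
      exact psi_mem _
  · have hsum : ∑ i : Fin d, Phi m d a i = Int.fract (-T) + T := by
      have h1 : ∀ i : Fin d, Phi m d a i =
          (if (i:ℕ) = 0 then Int.fract (-T) else 0) + psi m d a (i:ℕ) := by
        intro i
        by_cases h : (i:ℕ) = 0
        · simp [Phi, h, psi_zero, hT]
        · simp [Phi, h]
      rw [Finset.sum_congr rfl (fun i _ => h1 i), Finset.sum_add_distrib,
        finIndSum 0 (fun _ : Fin d => Int.fract (-T)), dif_pos (by omega : 0 < d), ← hT]
    rw [hsum]
    exact frA T
  · intro j
    rw [keySum hd (Phi m d a) j]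
    rcases Nat.eq_zero_or_pos (j:ℕ) with hj0 | hjpos
    · rw [if_pos hj0, dif_pos (by omega : (j:ℕ)+2 < d)]
      rw [Phi_pos a ((j:ℕ)+1) (by omega) (by omega), Phi_pos a ((j:ℕ)+2) (by omega) (by omega),
        hj0, mul_one]
      rw [psi_one a hd, psi_two a hd]
      exact frA _
    · rw [if_neg (by omega)]
      by_cases h2 : (j:ℕ) + 2 < d
      · rw [dif_pos h2, Phi_pos a ((j:ℕ)+1) (by omega) (by omega),
          Phi_pos a ((j:ℕ)+2) (by omega) (by omega)]
        rw [show (j:ℕ)+2 = ((j:ℕ)+1)+1 by ring,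
          psi_rec a hm ((j:ℕ)+1) (by omega) (by omega), mul_comm]
        exact frB m _
      · have hj : (j:ℕ) + 1 = d - 1 := by have := j.isLt; omega
        rw [dif_neg h2, Phi_pos a ((j:ℕ)+1) (by omega) (by omega), hj, add_zero, mul_comm]
        exact psi_last a hm hd

lemma FPP_eq_Phi {m d : ℕ} (hm : 1 ≤ m) (hd : 3 ≤ d) (lam : Fin d → ℝ)
    (h : IsFPP (Pvert m d) lam) : ∃ a : ℕ, a < m ^ (d-2) ∧ lam = Phi m d a := by
  have hm0 : (m:ℝ) ≠ 0 := by positivity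
  classical
  set L : ℕ → ℝ := fun c => if hc : c < d then lam ⟨c, hc⟩ else 0 with hL
  have hNice : ∀ (c : ℕ) (hc : c < d), L c = lam ⟨c, hc⟩ := fun c hc => dif_pos hc
  have hNice' : ∀ i : Fin d, L (i:ℕ) = lam i := by
    intro i; rw [hNice _ i.isLt]
  have hbL : ∀ c, c < d → 0 ≤ L c ∧ L c < 1 := by
    intro c hc; rw [hNice c hc]; exact h.1 _
  -- extract coordinate conditions
  have cond0 : ∃ z : ℤ, L 1 + L 2 = (z:ℝ) := by
    obtain ⟨z, hz⟩ := h.2.2 ⟨0, by omega⟩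
    rw [keySum hd lam ⟨0, by omega⟩] at hz
    refine ⟨z, ?_⟩
    rw [if_pos rfl, dif_pos (show (((⟨0, by omega⟩ : Fin (d-1)):ℕ))+2 < d by simp only [Fin.val_mk]; omega)] at hz
    rw [hNice 1 (by omega), hNice 2 (by omega)]
    rw [← hz, mul_one]
  have condMid : ∀ c, 2 ≤ c → c ≤ d-2 → ∃ z : ℤ, (m:ℝ) * L c + L (c+1) = (z:ℝ) := by
    intro c h2 hc2
    obtain ⟨z, hz⟩ := h.2.2 ⟨c-1, by omega⟩
    rw [keySum hd lam ⟨c-1, by omega⟩] at hz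
    refine ⟨z, ?_⟩
    rw [if_neg (by simp; omega), dif_pos (by simp; omega)] at hz
    rw [← hz, ← hNice' _, ← hNice' _]
    simp only [Fin.val_mk]
    rw [show c-1+1 = c by omega, show c-1+2 = c+1 by omega, mul_comm]
  have condLast : ∃ z : ℤ, (m:ℝ) * L (d-1) = (z:ℝ) := by
    obtain ⟨z, hz⟩ := h.2.2 ⟨d-2, by omega⟩
    rw [keySum hd lam ⟨d-2, by omega⟩] at hz
    refine ⟨z, ?_⟩
    rw [if_neg (by simp; omega), dif_neg (by simp; omega)] at hz
    rw [← hz, ← hNice' _]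
    simp only [Fin.val_mk]
    rw [show d-2+1 = d-1 by omega, mul_comm, add_zero]
  -- downward induction: m^t * L (d-t) is an integer
  have D : ∀ t, 1 ≤ t → t ≤ d-2 → ∃ z : ℤ, (m:ℝ)^t * L (d-t) = (z:ℝ) := by
    intro t ht
    induction t, ht using Nat.le_induction with
    | base => intro _; rw [pow_one]; exact condLast
    | succ t ht IH =>
      intro htd
      obtain ⟨z, hz⟩ := IH (by omega)
      obtain ⟨w, hw⟩ := condMid (d-(t+1)) (by omega) (by omega)
      rw [show d-(t+1)+1 = d-t by omega] at hw
      refine ⟨(m:ℤ)^t * w - z, ?_⟩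
      push_cast
      rw [pow_succ]
      linear_combination (m:ℝ)^t * hw - hz
  -- define a
  obtain ⟨z, hz⟩ := D (d-2) (by omega) le_rfl
  rw [show d-(d-2) = 2 by omega] at hz
  have hL2 := hbL 2 (by omega)
  have hmpow : (0:ℝ) < (m:ℝ)^(d-2) := by positivity
  have hz0 : 0 ≤ z := by
    have : (0:ℝ) ≤ (z:ℝ) := by rw [← hz]; exact mul_nonneg (by positivity) hL2.1
    exact_mod_cast this
  have hzlt : z < (m:ℤ)^(d-2) := by
    have : (z:ℝ) < (m:ℝ)^(d-2) := by
      rw [← hz]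
      calc (m:ℝ)^(d-2) * L 2 < (m:ℝ)^(d-2) * 1 := by
            exact mul_lt_mul_of_pos_left hL2.2 hmpow
        _ = (m:ℝ)^(d-2) := mul_one _
    exact_mod_cast this
  refine ⟨z.toNat, ?_, ?_⟩
  · have : (z.toNat : ℤ) < (m:ℤ)^(d-2) := by rwa [Int.toNat_of_nonneg hz0]
    exact_mod_cast this
  set a : ℕ := z.toNat with ha
  have haR : (a:ℝ) = (z:ℝ) := by
    have h' : ((z.toNat:ℤ):ℝ) = (z:ℝ) := by rw [Int.toNat_of_nonneg hz0]
    rw [ha]; exact_mod_cast h'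
  have hL2v : L 2 = (a:ℝ) / (m:ℝ)^(d-2) := by
    rw [haR]
    field_simp
    linarith [hz]
  -- upward: L c = psi c for 2 ≤ c ≤ d-1
  have U : ∀ c, 2 ≤ c → c ≤ d-1 → L c = psi m d a c := by
    intro c hc
    induction c, hc using Nat.le_induction with
    | base =>
      intro _
      rw [psi_two a hd, ← hL2v, Int.fract_eq_self.2 ⟨hL2.1, hL2.2⟩]
    | succ c hc IH =>
      intro hcd
      obtain ⟨w, hw⟩ := condMid c (by omega) (by omega)
      have hbc := hbL (c+1) (by omega)
      have key : -((m:ℝ) * L c) = L (c+1) + ((-w : ℤ):ℝ) := by push_cast; linarith [hw]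
      rw [psi_rec a hm c (by omega) (by omega), ← IH (by omega),
        key, Int.fract_add_intCast, Int.fract_eq_self.2 ⟨hbc.1, hbc.2⟩]
  -- L 1
  have hL1 : L 1 = psi m d a 1 := by
    obtain ⟨w, hw⟩ := cond0
    have hb1 := hbL 1 (by omega)
    have key : -(psi m d a 2) = L 1 + ((-w : ℤ):ℝ) := by
      rw [← U 2 le_rfl (by omega)]
      push_cast; linarith [hw]
    rw [psi_one a hd, key, Int.fract_add_intCast, Int.fract_eq_self.2 ⟨hb1.1, hb1.2⟩]
  have hLpsi : ∀ i : Fin d, (i:ℕ) ≠ 0 → lam i = psi m d a (i:ℕ) := by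
    intro i hi
    rcases Nat.lt_or_ge (i:ℕ) 2 with h1 | h2
    · have : (i:ℕ) = 1 := by omega
      rw [← hNice' i, this, hL1]
    · rw [← hNice' i]; exact U (i:ℕ) h2 (by have := i.isLt; omega)
  -- L 0
  set T : ℝ := ∑ i : Fin d, psi m d a (i:ℕ) with hT
  obtain ⟨z0, hz0sum⟩ := h.2.1
  have hsum : ∑ i : Fin d, lam i = lam ⟨0, by omega⟩ + T := by
    have hsplit : ∀ i : Fin d, lam i =
        (if (i:ℕ) = 0 then lam ⟨0, by omega⟩ else 0) + psi m d a (i:ℕ) := by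
      intro i
      by_cases hi : (i:ℕ) = 0
      · have : i = ⟨0, by omega⟩ := Fin.ext hi
        rw [this]
        simp [psi_zero]
      · rw [if_neg hi, zero_add]; exact hLpsi i hi
    rw [Finset.sum_congr rfl (fun i _ => hsplit i), Finset.sum_add_distrib,
      finIndSum 0 (fun _ : Fin d => lam ⟨0, by omega⟩), dif_pos (by omega : 0 < d), ← hT]
  have hlam0 : lam ⟨0, by omega⟩ = Int.fract (-T) := by
    have hb0 := h.1 ⟨0, by omega⟩
    have key : -T = lam ⟨0, by omega⟩ + ((-z0 : ℤ):ℝ) := by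
      push_cast
      rw [hsum] at hz0sum
      linarith [hz0sum]
    rw [key, Int.fract_add_intCast, Int.fract_eq_self.2 ⟨hb0.1, hb0.2⟩]
  -- conclude
  funext i
  by_cases hi : (i:ℕ) = 0
  · have hieq : i = ⟨0, by omega⟩ := Fin.ext hi
    rw [hieq]
    show lam ⟨0, by omega⟩ = Phi m d a ⟨0, by omega⟩
    rw [hlam0]
    simp [Phi, hT]
  · rw [hLpsi i hi]
    simp [Phi, hi]

lemma Phi_two {m d : ℕ} (a : ℕ) (hm : 1 ≤ m) (hd : 3 ≤ d) (ha : a < m^(d-2)) :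
    Phi m d a ⟨2, by omega⟩ = (a:ℝ) / (m:ℝ)^(d-2) := by
  rw [Phi_pos a 2 (by omega) (by omega), psi_two a hd]
  have hpow : (0:ℝ) < (m:ℝ)^(d-2) := by positivity
  apply Int.fract_eq_self.2
  constructor
  · positivity
  · rw [div_lt_one hpow]
    exact_mod_cast ha

lemma Phi_zero {m d : ℕ} : Phi m d 0 = 0 := by
  have hpsi : ∀ j, psi m d 0 j = 0 := by
    intro j
    unfold psi
    split_ifs <;> simp
  funext j
  by_cases hj : (j:ℕ) = 0 <;> simp [Phi, hj, hpsi]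

lemma NT1 {m : ℕ} (hm : 2 ≤ m) : ∀ e, 1 ≤ e → ∀ a : ℕ, 0 < a → a < m^e →
    ∃ k b : ℕ, 1 ≤ k ∧ k ≤ e ∧ 0 < b ∧ b < m^k ∧ ¬ m ∣ b ∧
      (a:ℝ)/(m:ℝ)^e = (b:ℝ)/(m:ℝ)^k := by
  intro e he
  induction e, he using Nat.le_induction with
  | base =>
    intro a ha0 halt
    exact ⟨1, a, le_rfl, le_rfl, ha0, by simpa using halt,
      fun hdvd => absurd (Nat.le_of_dvd ha0 hdvd) (by simpa using Nat.not_le.2 halt), rfl⟩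
  | succ e he IH =>
    intro a ha0 halt
    have hm0 : (m:ℝ) ≠ 0 := by positivity
    by_cases hdvd : m ∣ a
    · obtain ⟨c, rfl⟩ := hdvd
      have hc0 : 0 < c := Nat.pos_of_ne_zero (fun h => by simp [h] at ha0)
      have hclt : c < m^e := by
        have := halt
        rw [pow_succ'] at this
        exact Nat.lt_of_mul_lt_mul_left this
      obtain ⟨k, b, h1, h2, h3, h4, h5, h6⟩ := IH c hc0 hclt
      refine ⟨k, b, h1, by omega, h3, h4, h5, ?_⟩
      rw [← h6, pow_succ]
      push_cast
      field_simp
    · exact ⟨e+1, a, by omega, le_rfl, ha0, halt, hdvd, rfl⟩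

lemma NT2 {m : ℕ} (hm : 2 ≤ m) (e k b : ℕ) (hk1 : 1 ≤ k) (hke : k ≤ e)
    (hb0 : 0 < b) (hblt : b < m^k) :
    ∃ a : ℕ, 0 < a ∧ a < m^e ∧ (a:ℝ)/(m:ℝ)^e = (b:ℝ)/(m:ℝ)^k := by
  have hm0 : (m:ℝ) ≠ 0 := by positivity
  have hpk : 0 < m^(e-k) := Nat.pow_pos (by omega)
  refine ⟨b * m^(e-k), by positivity, ?_, ?_⟩
  · calc b * m^(e-k) < m^k * m^(e-k) :=
          (Nat.mul_lt_mul_right hpk).mpr hblt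
      _ = m^e := by rw [← pow_add]; congr 1; omega
  · have he : e = k + (e-k) := by omega
    rw [he, pow_add]
    push_cast
    field_simp
    ring
    rw [Nat.add_sub_cancel_left]

theorem stmt8 (m d : ℕ) (hm : 2 ≤ m) (hd : 3 ≤ d) :
    Set.InjOn (fun lam : Fin d → ℝ => lam ⟨2, by omega⟩)
      {lam : Fin d → ℝ | IsFPP (Pvert m d) lam ∧ lam ≠ 0} ∧
    (fun lam : Fin d → ℝ => lam ⟨2, by omega⟩) ''
        {lam : Fin d → ℝ | IsFPP (Pvert m d) lam ∧ lam ≠ 0} =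
      {x : ℝ | ∃ k b : ℕ, 1 ≤ k ∧ k ≤ d - 2 ∧ 0 < b ∧ b < m ^ k ∧ ¬ (m ∣ b) ∧
        x = (b : ℝ) / (m : ℝ) ^ k} ∧
    Set.ncard {lam : Fin d → ℝ | IsFPP (Pvert m d) lam} = m ^ (d - 2) := by
  have hm1 : 1 ≤ m := by omega
  have hm0 : (m:ℝ) ≠ 0 := by positivity
  have hpow : (0:ℝ) < (m:ℝ)^(d-2) := by positivity
  have hchar : ∀ lam : Fin d → ℝ,
      IsFPP (Pvert m d) lam ↔ ∃ a : ℕ, a < m^(d-2) ∧ lam = Phi m d a :=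
    fun lam => ⟨FPP_eq_Phi hm1 hd lam, fun ⟨a, _, hla⟩ => hla ▸ Phi_isFPP a hm1 hd⟩
  have hval : ∀ a : ℕ, a < m^(d-2) → Phi m d a ⟨2, by omega⟩ = (a:ℝ)/(m:ℝ)^(d-2) :=
    fun a ha => Phi_two a hm1 hd ha
  have hne : ∀ a : ℕ, a < m^(d-2) → (Phi m d a ≠ 0 ↔ a ≠ 0) := by
    intro a ha
    constructor
    · intro h h0; subst h0; exact h Phi_zero
    · intro h0 h
      have hv := hval a ha
      rw [h] at hv
      simp only [Pi.zero_apply] at hv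
      have : (a:ℝ) = 0 := by
        field_simp at hv
        simpa using hv.symm
      exact h0 (by exact_mod_cast this)
  refine ⟨?_, ?_, ?_⟩
  · -- injectivity
    intro x hx y hy hxy
    obtain ⟨a, ha, rfl⟩ := (hchar x).1 hx.1
    obtain ⟨b, hb, rfl⟩ := (hchar y).1 hy.1
    have hxy' : Phi m d a ⟨2, by omega⟩ = Phi m d b ⟨2, by omega⟩ := hxy
    rw [hval a ha, hval b hb] at hxy'
    have hab : (a:ℝ) = (b:ℝ) := by field_simp at hxy'; exact_mod_cast hxy'
    rw [Nat.cast_inj.1 hab]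
  · -- image
    ext x
    simp only [Set.mem_image, Set.mem_setOf_eq]
    constructor
    · rintro ⟨lam, ⟨hF, hne0⟩, rfl⟩
      obtain ⟨a, ha, rfl⟩ := (hchar lam).1 hF
      have ha0 : a ≠ 0 := (hne a ha).1 hne0
      obtain ⟨k, b, h1, h2, h3, h4, h5, h6⟩ :=
        NT1 hm (d-2) (by omega) a (by omega) ha
      exact ⟨k, b, h1, h2, h3, h4, h5, by
        show Phi m d a ⟨2, by omega⟩ = _
        rw [hval a ha]; exact h6⟩
    · rintro ⟨k, b, hk1, hk2, hb0, hblt, hnd, rfl⟩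
      obtain ⟨a, ha0, halt, heq⟩ := NT2 hm (d-2) k b hk1 hk2 hb0 hblt
      refine ⟨Phi m d a, ⟨(hchar _).2 ⟨a, halt, rfl⟩, (hne a halt).2 (by omega)⟩, ?_⟩
      show Phi m d a ⟨2, by omega⟩ = _
      rw [hval a halt]; exact heq
  · -- count
    have hset : {lam : Fin d → ℝ | IsFPP (Pvert m d) lam} =
        Phi m d '' Set.Iio (m^(d-2)) := by
      ext lam
      simp only [Set.mem_setOf_eq, Set.mem_image, Set.mem_Iio]
      rw [hchar lam]
      exact ⟨fun ⟨a, ha, h⟩ => ⟨a, ha, h.symm⟩, fun ⟨a, ha, h⟩ => ⟨a, ha, h.symm⟩⟩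
    have hinj : Set.InjOn (Phi m d) (Set.Iio (m^(d-2))) := by
      intro a ha b hb hab
      have : Phi m d a ⟨2, by omega⟩ = Phi m d b ⟨2, by omega⟩ := by rw [hab]
      rw [hval a ha, hval b hb] at this
      have hab' : (a:ℝ) = (b:ℝ) := by field_simp at this; exact_mod_cast this
      exact Nat.cast_inj.1 hab'
    rw [hset, Set.ncard_image_of_injOn hinj, ← Finset.coe_Iio,
      Set.ncard_coe_finset, Nat.card_Iio]
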